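/- Let d ≥ 2 and let |𝒮_d⟩ = (1/√(d!)) ∑_{i_1,…,i_d=0}^{d−1} ε_{i_1,…,i_d} |i_1 … i_d⟩ ∈ (ℂ^d)^{⊗d} be the Aharonov (totally antisymmetric) state, where ε is the generalized Levi-Civita symbol. Then for every orthonormal basis B of ℂ^d measured on all d subsystems and for every subsystem l ∈ {1,…,d}, the mutual information between the outcome at subsystem l and the outcomes at the remaining subsystems equals log₂ d. Consequently, whenever a set of N mutually unbiased bases exists on ℂ^d, 𝒞_N(𝒮_d) = log₂ d, the maximal value. -/

import Mathlib

open scoped BigOperators ComplexOrder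

namespace Paper

noncomputable section

/-- Base-2 Shannon entropy of a finitely indexed probability vector. -/
def shannon {α : Type*} [Fintype α] (p : α → ℝ) : ℝ :=
  ∑ a, -(p a * Real.logb 2 (p a))

/-- Joint outcome type for `n` subsystems of local dimension `d`. -/
abbrev Idx (n d : ℕ) := Fin n → Fin d

/-- The projector `|ψ⟩⟨ψ|`. -/
def proj {α : Type*} (ψ : α → ℂ) : Matrix α α ℂ :=
  Matrix.of fun x y => ψ x * (starRingEnd ℂ) (ψ y)

/-- A density operator: positive semidefinite with trace one. -/
def IsDensityOp {α : Type*} [Fintype α] [DecidableEq α] (ρ : Matrix α α ℂ) : Prop :=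
  ρ.PosSemidef ∧ ρ.trace = 1

/-- `B` is an orthonormal basis of `ℂ^d` (`B i` is the `i`-th basis vector). -/
def IsONB {d : ℕ} (B : Fin d → Fin d → ℂ) : Prop :=
  ∀ i j, (∑ x, (starRingEnd ℂ) (B i x) * B j x) = if i = j then 1 else 0

/-- Two bases of `ℂ^d` are mutually unbiased. -/
def MutUnbiased {d : ℕ} (B B' : Fin d → Fin d → ℂ) : Prop :=
  ∀ i j, ‖∑ x, (starRingEnd ℂ) (B i x) * B' j x‖ ^ 2 = 1 / d

/-- Joint outcome distribution of measuring the orthonormal basis `B l` on each factor `l`. -/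
def jointProb {n d : ℕ} (ρ : Matrix (Idx n d) (Idx n d) ℂ)
    (B : Fin n → Fin d → Fin d → ℂ) (i : Idx n d) : ℝ :=
  (∑ x : Idx n d, ∑ y : Idx n d,
    (∏ l, (starRingEnd ℂ) (B l (i l) (x l))) * ρ x y * (∏ l, B l (i l) (y l))).re

/-- Marginal distribution of subsystem `l`. -/
def margAt {n d : ℕ} (p : Idx n d → ℝ) (l : Fin n) (i : Fin d) : ℝ :=
  ∑ x : Idx n d, if x l = i then p x else 0

/-- Insert outcome `i` at position `l` into a tuple of outcomes of the other subsystems. -/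
def insertAt {n d : ℕ} (l : Fin n) (i : Fin d) (g : {m : Fin n // m ≠ l} → Fin d) : Idx n d :=
  fun m => if h : m = l then i else g ⟨m, h⟩

/-- Marginal distribution of all subsystems except `l`. -/
def margRest {n d : ℕ} (p : Idx n d → ℝ) (l : Fin n)
    (g : {m : Fin n // m ≠ l} → Fin d) : ℝ :=
  ∑ i : Fin d, p (insertAt l i g)

/-- Mutual information `I(B⁽ˡ⁾ : B⁽ˡ̄⁾)` between the outcome at subsystem `l` and the
outcomes at the remaining subsystems, for the joint outcome distribution `p`. -/
def mutualInfo {n d : ℕ} (p : Idx n d → ℝ) (l : Fin n) : ℝ :=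
  shannon (margAt p l) + shannon (margRest p l) - shannon p

/-- The correlation function `C_N(ρ, {B_k^{(l)}})`. -/
def CNval {n d : ℕ} (N : ℕ) (ρ : Matrix (Idx n d) (Idx n d) ℂ)
    (B : Fin N → Fin n → Fin d → Fin d → ℂ) : ℝ :=
  (1 / (n * N)) * ∑ k, ∑ l, mutualInfo (jointProb ρ (B k)) l

/-- `B k l` is, for each subsystem `l`, a family of `N` pairwise mutually unbiased
orthonormal bases (indexed by `k`). -/
def ValidMUBs {n d : ℕ} (N : ℕ) (B : Fin N → Fin n → Fin d → Fin d → ℂ) : Prop :=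
  (∀ k l, IsONB (B k l)) ∧ ∀ l k k', k ≠ k' → MutUnbiased (B k l) (B k' l)

/-- The set of values `C_N(ρ, ·)` over all admissible choices of MUBs;
`𝒞_N(ρ)` is the supremum of this set. -/
def CNvalues {n d : ℕ} (N : ℕ) (ρ : Matrix (Idx n d) (Idx n d) ℂ) : Set ℝ :=
  {x | ∃ B : Fin N → Fin n → Fin d → Fin d → ℂ, ValidMUBs N B ∧ x = CNval N ρ B}

/-- Single-subsystem reduced state `tr_{l̄} ρ`. -/
def reducedAt {n d : ℕ} (ρ : Matrix (Idx n d) (Idx n d) ℂ) (l : Fin n) :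
    Matrix (Fin d) (Fin d) ℂ :=
  Matrix.of fun i j =>
    ∑ g : {m : Fin n // m ≠ l} → Fin d, ρ (insertAt l i g) (insertAt l j g)

/-- `ω_d = exp(2πi/d)`. -/
def ω (d : ℕ) : ℂ := Complex.exp (2 * Real.pi * Complex.I / d)

/-- The generalized Pauli operator `X_d`. -/
def Xmat (d : ℕ) : Matrix (Fin d) (Fin d) ℂ :=
  Matrix.of fun i j => if (i : ℕ) = ((j : ℕ) + 1) % d then 1 else 0

/-- The generalized Pauli operator `Z_d`. -/
def Zmat (d : ℕ) : Matrix (Fin d) (Fin d) ℂ :=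
  Matrix.of fun i j => if i = j then ω d ^ (i : ℕ) else 0

/-- The generalized Pauli operator `S_{d,(k₁,k₂)} = X_d^{k₁} Z_d^{k₂}`. -/
def Smat (d : ℕ) (k : Fin d × Fin d) : Matrix (Fin d) (Fin d) ℂ :=
  Xmat d ^ (k.1 : ℕ) * Zmat d ^ (k.2 : ℕ)

/-- Apply a local operator `A l` to each tensor factor of a multipartite vector `ψ`,
i.e. the vector `(⊗_l A l) ψ`. -/
def applyLocal {n d : ℕ} (A : Fin n → Matrix (Fin d) (Fin d) ℂ) (ψ : Idx n d → ℂ) :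
    Idx n d → ℂ :=
  fun x => ∑ y : Idx n d, (∏ l, A l (x l) (y l)) * ψ y

/-- The computational (standard) basis of `ℂ^d`, the eigenbasis of `Z_d`. -/
def stdBasis (d : ℕ) : Fin d → Fin d → ℂ :=
  fun i x => if x = i then 1 else 0

/-- The Fourier basis of `ℂ^d`, the eigenbasis of `X_d`. -/
def fourierBasis (d : ℕ) : Fin d → Fin d → ℂ :=
  fun i x => (((Real.sqrt d)⁻¹ : ℝ) : ℂ) * ω d ^ ((i : ℕ) * (x : ℕ))

/-- The `n`-fold tensor product `⊗_l A l` as a matrix on the joint system. -/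
def tensorN {n d : ℕ} (A : Fin n → Matrix (Fin d) (Fin d) ℂ) :
    Matrix (Idx n d) (Idx n d) ℂ :=
  Matrix.of fun x y => ∏ l, A l (x l) (y l)

/-- Full separability of an `n`-partite density operator. -/
def FullySep {n d : ℕ} (ρ : Matrix (Idx n d) (Idx n d) ℂ) : Prop :=
  ∃ (J : ℕ) (p : Fin J → ℝ) (σ : Fin J → Fin n → Matrix (Fin d) (Fin d) ℂ),
    (∀ j, 0 ≤ p j) ∧ (∑ j, p j) = 1 ∧ (∀ j l, IsDensityOp (σ j l)) ∧
    ρ = ∑ j, p j • tensorN (σ j)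

/-- generalized GHZ state `(1/√d) ∑_i |i⟩^{⊗n}`. -/
def GHZvec (d n : ℕ) : Idx n d → ℂ :=
  fun x => if ∀ l l', x l = x l' then (((Real.sqrt d)⁻¹ : ℝ) : ℂ) else 0


/-- The Aharonov (totally antisymmetric) state `|𝒮_d⟩` of `d` qudits. -/
def aharonov (d : ℕ) : Idx d d → ℂ :=
  fun x =>
    if h : Function.Bijective x then
      (((Real.sqrt (Nat.factorial d))⁻¹ : ℝ) : ℂ) *
        (((Equiv.Perm.sign (Equiv.ofBijective x h) : ℤ) : ℂ))
    else 0

lemma shannon_uniform {α : Type*} [Fintype α] [DecidableEq α] (S : Finset α) (hS : 0 < S.card)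
    (p : α → ℝ) (hp : ∀ a, p a = if a ∈ S then ((S.card : ℝ))⁻¹ else 0) :
    shannon p = Real.logb 2 (S.card : ℝ) := by
  have hc : (0:ℝ) < (S.card : ℝ) := by exact_mod_cast hS
  have h1 : ∀ a, -(p a * Real.logb 2 (p a)) =
      if a ∈ S then ((S.card:ℝ))⁻¹ * Real.logb 2 (S.card : ℝ) else 0 := by
    intro a
    rw [hp a]
    split
    · rw [Real.logb_inv]; ring
    · simp
  unfold shannon
  simp only [h1]
  rw [Finset.sum_ite_mem, Finset.univ_inter, Finset.sum_const, nsmul_eq_mul]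
  field_simp

lemma negMulLog_sum_le {ι : Type*} [Fintype ι] (q : ι → ℝ) (hq : ∀ i, 0 ≤ q i) :
    -((∑ i, q i) * Real.logb 2 (∑ i, q i)) ≤ ∑ i, -(q i * Real.logb 2 (q i)) := by
  have key : ∑ i, q i * Real.logb 2 (q i) ≤ (∑ i, q i) * Real.logb 2 (∑ i, q i) := by
    rw [Finset.sum_mul]
    apply Finset.sum_le_sum
    intro i _
    rcases eq_or_lt_of_le (hq i) with h0 | h0
    · rw [← h0]; simp
    · refine mul_le_mul_of_nonneg_left ?_ (hq i)
      refine Real.logb_le_logb_of_le one_lt_two h0 ?_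
      exact Finset.single_le_sum (fun j _ => hq j) (Finset.mem_univ i)
  have : ∑ i, -(q i * Real.logb 2 (q i)) = -(∑ i, q i * Real.logb 2 (q i)) := by
    rw [Finset.sum_neg_distrib]
  rw [this]
  linarith

lemma shannon_le_logb_card {α : Type*} [Fintype α] (hα : 0 < Fintype.card α) (p : α → ℝ)
    (h0 : ∀ a, 0 ≤ p a) (h1 : ∑ a, p a = 1) :
    shannon p ≤ Real.logb 2 (Fintype.card α : ℝ) := by
  set n : ℝ := (Fintype.card α : ℝ) with hn
  have hnpos : (0:ℝ) < n := by rw [hn]; exact_mod_cast hα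
  have hlog2 : (0:ℝ) < Real.log 2 := Real.log_pos one_lt_two
  have key : ∑ a, -(p a * Real.log (p a)) ≤ Real.log n := by
    have hterm : ∀ a, -(p a * Real.log (p a)) ≤ n⁻¹ - p a + p a * Real.log n := by
      intro a
      rcases eq_or_lt_of_le (h0 a) with h | h
      · rw [← h]; simp; positivity
      · have hx : (0:ℝ) < (n * p a)⁻¹ := by positivity
        have := Real.log_le_sub_one_of_pos hx
        rw [Real.log_inv, Real.log_mul (ne_of_gt hnpos) (ne_of_gt h)] at this
        have h2 : p a * (-(Real.log n + Real.log (p a))) ≤ p a * ((n * p a)⁻¹ - 1) :=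
          mul_le_mul_of_nonneg_left this (h0 a)
        have h3 : p a * ((n * p a)⁻¹ - 1) = n⁻¹ - p a := by
          field_simp
        rw [h3] at h2
        nlinarith
    calc ∑ a, -(p a * Real.log (p a)) ≤ ∑ a, (n⁻¹ - p a + p a * Real.log n) :=
          Finset.sum_le_sum fun a _ => hterm a
      _ = (Fintype.card α : ℝ) * n⁻¹ - 1 + Real.log n := by
          rw [Finset.sum_add_distrib, Finset.sum_sub_distrib, Finset.sum_const,
            ← Finset.sum_mul, h1]
          simp only [Finset.card_univ, nsmul_eq_mul, one_mul]
      _ = Real.log n := by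
          rw [← hn]
          field_simp
          ring
  unfold shannon
  have : ∀ a, -(p a * Real.logb 2 (p a)) = -(p a * Real.log (p a)) / Real.log 2 := by
    intro a; rw [Real.logb]; ring
  simp only [this]
  rw [← Finset.sum_div, Real.logb]
  exact div_le_div_of_nonneg_right key hlog2.le

@[simp] lemma insertAt_self {n d : ℕ} (l : Fin n) (i : Fin d) (g) :
    insertAt l i g l = i := by simp [insertAt]

lemma insertAt_ne {n d : ℕ} (l : Fin n) (i : Fin d) (g) (m : {m : Fin n // m ≠ l}) :
    insertAt l i g m.1 = g m := by
  simp only [insertAt, dif_neg m.2]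

def splitEquiv {n d : ℕ} (l : Fin n) : (Fin d × ({m : Fin n // m ≠ l} → Fin d)) ≃ Idx n d where
  toFun := fun ig => insertAt l ig.1 ig.2
  invFun := fun x => (x l, fun m => x m.1)
  left_inv := by
    rintro ⟨i, g⟩
    refine Prod.ext (by simp) ?_
    funext m
    exact insertAt_ne l i g m
  right_inv := by
    intro x
    funext m
    by_cases h : m = l
    · subst h; simp
    · exact insertAt_ne l (x l) _ ⟨m, h⟩

lemma sum_split {n d : ℕ} (l : Fin n) (F : Idx n d → ℝ) :
    ∑ x : Idx n d, F x =
      ∑ g : {m : Fin n // m ≠ l} → Fin d, ∑ i : Fin d, F (insertAt l i g) := by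
  rw [← Equiv.sum_comp (splitEquiv l) F, Fintype.sum_prod_type, Finset.sum_comm]
  rfl

lemma sum_margAt {n d : ℕ} (p : Idx n d → ℝ) (l : Fin n) :
    ∑ j, margAt p l j = ∑ x, p x := by
  unfold margAt
  rw [Finset.sum_comm]
  congr 1
  funext x
  simp

lemma margAt_nonneg {n d : ℕ} (p : Idx n d → ℝ) (h0 : ∀ x, 0 ≤ p x) (l : Fin n) (j : Fin d) :
    0 ≤ margAt p l j := by
  apply Finset.sum_nonneg
  intro x _
  split
  · exact h0 x
  · exact le_refl 0

lemma shannon_margRest_le {n d : ℕ} (p : Idx n d → ℝ) (h0 : ∀ x, 0 ≤ p x) (l : Fin n) :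
    shannon (margRest p l) ≤ shannon p := by
  unfold shannon
  rw [sum_split l (fun x => -(p x * Real.logb 2 (p x)))]
  apply Finset.sum_le_sum
  intro g _
  have := negMulLog_sum_le (fun i => p (insertAt l i g)) (fun i => h0 _)
  simpa [margRest] using this

lemma mutualInfo_le_logb {n d : ℕ} (hd : 0 < d) (p : Idx n d → ℝ)
    (h0 : ∀ x, 0 ≤ p x) (h1 : ∑ x, p x = 1) (l : Fin n) :
    mutualInfo p l ≤ Real.logb 2 (d : ℝ) := by
  have hA : shannon (margAt p l) ≤ Real.logb 2 (d : ℝ) := by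
    have := shannon_le_logb_card (α := Fin d) (by simpa using hd) (margAt p l)
      (margAt_nonneg p h0 l) (by rw [sum_margAt, h1])
    simpa using this
  have hB := shannon_margRest_le p h0 l
  unfold mutualInfo
  linarith

lemma jointProb_proj {n d : ℕ} (ψ : Idx n d → ℂ) (B : Fin n → Fin d → Fin d → ℂ) (i : Idx n d) :
    jointProb (proj ψ) B i =
      Complex.normSq (∑ x : Idx n d, (∏ l, (starRingEnd ℂ) (B l (i l) (x l))) * ψ x) := by
  unfold jointProb proj
  set a := ∑ x : Idx n d, (∏ l, (starRingEnd ℂ) (B l (i l) (x l))) * ψ x with ha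
  have key : (∑ x : Idx n d, ∑ y : Idx n d,
      (∏ l, (starRingEnd ℂ) (B l (i l) (x l))) * (Matrix.of fun x y => ψ x * (starRingEnd ℂ) (ψ y)) x y
        * (∏ l, B l (i l) (y l))) = a * (starRingEnd ℂ) a := by
    rw [ha, map_sum, Finset.sum_mul_sum]
    apply Finset.sum_congr rfl
    intro x _
    apply Finset.sum_congr rfl
    intro y _
    simp only [Matrix.of_apply, map_mul, map_prod, Complex.conj_conj]
    ring
  rw [key, Complex.mul_conj]
  simp

lemma onb_cols {d : ℕ} {B : Fin d → Fin d → ℂ} (hB : IsONB B) (x y : Fin d) :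
    (∑ j, (starRingEnd ℂ) (B j x) * B j y) = if x = y then 1 else 0 := by
  classical
  set U : Matrix (Fin d) (Fin d) ℂ := Matrix.of fun j x => B j x with hU
  have hUU : U * U.conjTranspose = 1 := by
    ext i j
    rw [Matrix.mul_apply]
    simp only [Matrix.conjTranspose_apply, hU, Matrix.of_apply, Complex.star_def]
    have h1 : ∑ x, B i x * (starRingEnd ℂ) (B j x)
        = (starRingEnd ℂ) (∑ x, (starRingEnd ℂ) (B i x) * B j x) := by
      rw [map_sum]; apply Finset.sum_congr rfl; intro x _; rw [map_mul, Complex.conj_conj]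
    rw [h1, hB i j]
    by_cases h : i = j <;> simp [h, Matrix.one_apply]
  have hUU' : U.conjTranspose * U = 1 := mul_eq_one_comm.mp hUU
  have h2 : (U.conjTranspose * U) x y = ∑ j, (starRingEnd ℂ) (B j x) * B j y := by
    rw [Matrix.mul_apply]
    simp [Matrix.conjTranspose_apply, hU, Complex.star_def]
  rw [← h2, hUU']
  simp [Matrix.one_apply]

lemma prod_delta {n d : ℕ} (x y : Idx n d) :
    (∏ l, if x l = y l then (1:ℂ) else 0) = if x = y then 1 else 0 := by
  by_cases h : x = y
  · subst h; simp
  · rw [if_neg h]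
    obtain ⟨l, hl⟩ := Function.ne_iff.mp h
    exact Finset.prod_eq_zero (Finset.mem_univ l) (by rw [if_neg hl])

lemma sum_jointProb_proj {n d : ℕ} (ψ : Idx n d → ℂ) (B : Fin n → Fin d → Fin d → ℂ)
    (hB : ∀ l, IsONB (B l)) (hψ : ∑ x, Complex.normSq (ψ x) = 1) :
    ∑ i, jointProb (proj ψ) B i = 1 := by
  have key : ∀ i, jointProb (proj ψ) B i = (((∑ x : Idx n d, (∏ l, (starRingEnd ℂ) (B l (i l) (x l))) * ψ x) *
      (starRingEnd ℂ) (∑ x : Idx n d, (∏ l, (starRingEnd ℂ) (B l (i l) (x l))) * ψ x)).re) := by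
    intro i
    rw [jointProb_proj, Complex.mul_conj]
    simp
  simp only [key]
  rw [← Complex.re_sum]
  have main : (∑ i : Idx n d, (∑ x : Idx n d, (∏ l, (starRingEnd ℂ) (B l (i l) (x l))) * ψ x) *
      (starRingEnd ℂ) (∑ x : Idx n d, (∏ l, (starRingEnd ℂ) (B l (i l) (x l))) * ψ x)) = 1 := by
    have expand : ∀ i : Idx n d, (∑ x : Idx n d, (∏ l, (starRingEnd ℂ) (B l (i l) (x l))) * ψ x) *
        (starRingEnd ℂ) (∑ x : Idx n d, (∏ l, (starRingEnd ℂ) (B l (i l) (x l))) * ψ x)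
        = ∑ x : Idx n d, ∑ y : Idx n d, (ψ x * (starRingEnd ℂ) (ψ y)) *
            ∏ l, (starRingEnd ℂ) (B l (i l) (x l)) * B l (i l) (y l) := by
      intro i
      rw [map_sum, Finset.sum_mul_sum]
      apply Finset.sum_congr rfl; intro x _
      apply Finset.sum_congr rfl; intro y _
      simp only [map_mul, map_prod, Complex.conj_conj, Finset.prod_mul_distrib]
      ring
    simp only [expand]
    rw [Finset.sum_comm]
    have swap2 : ∀ x : Idx n d, (∑ i : Idx n d, ∑ y : Idx n d, (ψ x * (starRingEnd ℂ) (ψ y)) *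
        ∏ l, (starRingEnd ℂ) (B l (i l) (x l)) * B l (i l) (y l))
        = ∑ y : Idx n d, (ψ x * (starRingEnd ℂ) (ψ y)) *
            ∑ i : Idx n d, ∏ l, (starRingEnd ℂ) (B l (i l) (x l)) * B l (i l) (y l) := by
      intro x
      rw [Finset.sum_comm]
      apply Finset.sum_congr rfl; intro y _
      rw [Finset.mul_sum]
    simp only [swap2]
    have inner : ∀ x y : Idx n d, (∑ i : Idx n d, ∏ l, (starRingEnd ℂ) (B l (i l) (x l)) * B l (i l) (y l))
        = if x = y then 1 else 0 := by
      intro x y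
      have h := Finset.prod_univ_sum (κ := fun _ : Fin n => Fin d) (fun _ => (Finset.univ : Finset (Fin d)))
        (fun l j => (starRingEnd ℂ) (B l j (x l)) * B l j (y l))
      rw [Fintype.piFinset_univ] at h
      rw [← h, ← prod_delta x y]
      apply Finset.prod_congr rfl
      intro l _
      exact onb_cols (hB l) (x l) (y l)
    simp only [inner]
    have : ∀ x : Idx n d, (∑ y : Idx n d, (ψ x * (starRingEnd ℂ) (ψ y)) * if x = y then 1 else 0)
        = ψ x * (starRingEnd ℂ) (ψ x) := by
      intro x
      rw [Finset.sum_eq_single x]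
      · rw [if_pos rfl, mul_one]
      · intro b _ hb
        rw [if_neg (fun h => hb h.symm), mul_zero]
      · intro h; exact absurd (Finset.mem_univ x) h
    simp only [this, Complex.mul_conj]
    rw [← Complex.ofReal_sum]
    exact_mod_cast congrArg (Complex.ofReal) hψ
  rw [main]
  simp

lemma onb_unitary {d : ℕ} {B : Fin d → Fin d → ℂ} (hB : IsONB B) :
    (Matrix.of fun j x => B j x) * (Matrix.of fun j x => B j x).conjTranspose = 1 := by
  ext i j
  rw [Matrix.mul_apply]
  simp only [Matrix.conjTranspose_apply, Matrix.of_apply, Complex.star_def]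
  have h1 : ∑ x, B i x * (starRingEnd ℂ) (B j x)
      = (starRingEnd ℂ) (∑ x, (starRingEnd ℂ) (B i x) * B j x) := by
    rw [map_sum]; apply Finset.sum_congr rfl; intro x _; rw [map_mul, Complex.conj_conj]
  rw [h1, hB i j]
  by_cases h : i = j <;> simp [h, Matrix.one_apply]

lemma normSq_det_onb {d : ℕ} {B : Fin d → Fin d → ℂ} (hB : IsONB B) :
    Complex.normSq (Matrix.of fun j x => B j x).det = 1 := by
  set U : Matrix (Fin d) (Fin d) ℂ := Matrix.of fun j x => B j x
  have h := congrArg Matrix.det (onb_unitary hB)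
  rw [Matrix.det_mul, Matrix.det_conjTranspose, Matrix.det_one] at h
  have : (Complex.normSq U.det : ℂ) = 1 := by
    rw [← Complex.mul_conj]
    exact h
  exact_mod_cast this

lemma injective_card (d : ℕ) :
    (Finset.univ.filter fun x : Idx d d => Function.Injective x).card = Nat.factorial d := by
  classical
  rw [← Fintype.card_subtype]
  rw [Fintype.card_congr (Equiv.subtypeInjectiveEquivEmbedding (Fin d) (Fin d))]
  rw [Fintype.card_embedding_eq, Fintype.card_fin, Nat.descFactorial_self]

lemma jointProb_aharonov {d : ℕ} (B : Fin d → Fin d → ℂ) (hB : IsONB B) (i : Idx d d) :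
    jointProb (proj (aharonov d)) (fun _ => B) i
      = if Function.Injective i then ((Nat.factorial d : ℝ))⁻¹ else 0 := by
  classical
  rw [jointProb_proj]
  set c : ℂ := (((Real.sqrt (Nat.factorial d))⁻¹ : ℝ) : ℂ) with hc
  set M : Matrix (Fin d) (Fin d) ℂ := Matrix.of fun l m => (starRingEnd ℂ) (B (i l) m) with hM
  have hnc : Complex.normSq c = ((Nat.factorial d : ℝ))⁻¹ := by
    rw [hc, Complex.normSq_ofReal, ← mul_inv]
    rw [Real.mul_self_sqrt (by positivity)]
  have hamp : (∑ x : Idx d d, (∏ l, (starRingEnd ℂ) ((fun _ => B) l (i l) (x l))) * aharonov d x)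
      = c * M.det := by
    have hdet : M.det = ∑ σ : Equiv.Perm (Fin d),
        (((Equiv.Perm.sign σ : ℤ) : ℂ)) * ∏ l, (starRingEnd ℂ) (B (i l) (σ l)) := by
      rw [← Matrix.det_transpose, Matrix.det_apply']
      apply Finset.sum_congr rfl
      intro σ _
      simp [Matrix.transpose_apply, hM]
    have hsub : (Finset.image (fun σ : Equiv.Perm (Fin d) => ⇑σ) Finset.univ) ⊆ Finset.univ :=
      Finset.subset_univ _
    have hzero : ∀ x ∈ (Finset.univ : Finset (Idx d d)),
        x ∉ Finset.image (fun σ : Equiv.Perm (Fin d) => ⇑σ) Finset.univ →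
        (∏ l, (starRingEnd ℂ) (B (i l) (x l))) * aharonov d x = 0 := by
      intro x _ hx
      have hnb : ¬ Function.Bijective x := by
        intro hbij
        exact hx (Finset.mem_image.mpr ⟨Equiv.ofBijective x hbij, Finset.mem_univ _, rfl⟩)
      unfold aharonov
      rw [dif_neg hnb, mul_zero]
    rw [← Finset.sum_subset hsub hzero]
    rw [Finset.sum_image (fun σ _ τ _ h => Equiv.coe_fn_injective h)]
    rw [hdet, Finset.mul_sum]
    apply Finset.sum_congr rfl
    intro σ _
    have hb : Function.Bijective ⇑σ := σ.bijective
    have hof : Equiv.ofBijective ⇑σ hb = σ := Equiv.ext fun _ => rfl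
    unfold aharonov
    rw [dif_pos hb, hof]
    ring
  rw [hamp]
  by_cases hi : Function.Injective i
  · rw [if_pos hi]
    have hbij : Function.Bijective i := Finite.injective_iff_bijective.mp hi
    set τ : Equiv.Perm (Fin d) := Equiv.ofBijective i hbij with hτ
    have hMsub : M = (Matrix.of fun a m => (starRingEnd ℂ) (B a m)).submatrix ⇑τ id := rfl
    have hdet2 : M.det = (((Equiv.Perm.sign τ : ℤ) : ℂ)) *
        (Matrix.of fun a m => (starRingEnd ℂ) (B a m)).det := by
      rw [hMsub, Matrix.det_permute]
    have hCdet : Complex.normSq (Matrix.of fun a m => (starRingEnd ℂ) (B a m)).det = 1 := by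
      have htr : (Matrix.of fun a m => (starRingEnd ℂ) (B a m))
          = ((Matrix.of fun j x => B j x).conjTranspose).transpose := by
        ext a m; simp [Matrix.conjTranspose_apply, Complex.star_def]
      rw [htr, Matrix.det_transpose, Matrix.det_conjTranspose]
      rw [show star (Matrix.of fun j x => B j x).det
        = (starRingEnd ℂ) (Matrix.of fun j x => B j x).det from rfl]
      rw [Complex.normSq_conj]
      exact normSq_det_onb hB
    rw [hdet2, Complex.normSq_mul, Complex.normSq_mul, hnc, hCdet]
    rcases Int.units_eq_one_or (Equiv.Perm.sign τ) with h | h <;> rw [h] <;> norm_num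
  · rw [if_neg hi]
    obtain ⟨a, b, hab, hne⟩ := Function.not_injective_iff.mp hi
    have hrow : M a = M b := by
      funext m; simp only [hM, Matrix.of_apply, hab]
    rw [Matrix.det_zero_of_row_eq hne hrow, mul_zero, map_zero]

def pAh (d : ℕ) : Idx d d → ℝ :=
  fun x => if Function.Injective x then ((Nat.factorial d : ℝ))⁻¹ else 0

lemma sum_pAh (d : ℕ) : ∑ x : Idx d d, pAh d x = 1 := by
  classical
  unfold pAh
  rw [← Finset.sum_filter, Finset.sum_const, injective_card, nsmul_eq_mul]
  have : ((Nat.factorial d : ℝ)) ≠ 0 := by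
    exact_mod_cast (Nat.factorial_pos d).ne'
  field_simp

lemma normSq_aharonov (d : ℕ) (x : Idx d d) : Complex.normSq (aharonov d x) = pAh d x := by
  unfold aharonov pAh
  by_cases h : Function.Bijective x
  · rw [dif_pos h, if_pos h.injective]
    rw [Complex.normSq_mul, Complex.normSq_ofReal, ← mul_inv,
      Real.mul_self_sqrt (by positivity)]
    rcases Int.units_eq_one_or (Equiv.Perm.sign (Equiv.ofBijective x h)) with hs | hs <;>
      rw [hs] <;> norm_num
  · rw [dif_neg h, if_neg (fun hi => h (Finite.injective_iff_bijective.mp hi))]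
    simp

lemma sum_normSq_aharonov (d : ℕ) : ∑ x : Idx d d, Complex.normSq (aharonov d x) = 1 := by
  simp only [normSq_aharonov]; exact sum_pAh d

lemma margAt_pAh_const {d : ℕ} (l j j' : Fin d) :
    margAt (pAh d) l j = margAt (pAh d) l j' := by
  classical
  unfold margAt
  have e : Idx d d ≃ Idx d d := Equiv.arrowCongr (Equiv.refl (Fin d)) (Equiv.swap j j')
  rw [← Equiv.sum_comp (Equiv.arrowCongr (Equiv.refl (Fin d)) (Equiv.swap j j'))
    (fun x => if x l = j' then pAh d x else 0)]
  apply Finset.sum_congr rfl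
  intro x _
  have hcomp : ⇑(Equiv.arrowCongr (Equiv.refl (Fin d)) (Equiv.swap j j')) x
      = ⇑(Equiv.swap j j') ∘ x := by
    funext m; rfl
  rw [hcomp]
  have hval : (⇑(Equiv.swap j j') ∘ x) l = Equiv.swap j j' (x l) := rfl
  have hcond : (Equiv.swap j j' (x l) = j') ↔ (x l = j) := by
    rw [← Equiv.injective (Equiv.swap j j') |>.eq_iff (b := j)]
    rw [Equiv.swap_apply_left]
  have hpv : pAh d (⇑(Equiv.swap j j') ∘ x) = pAh d x := by
    unfold pAh
    rw [if_congr (Equiv.comp_injective x (Equiv.swap j j')) rfl rfl]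
  simp only [hval, hcond, hpv]

lemma margAt_pAh {d : ℕ} (hd : 0 < d) (l j : Fin d) :
    margAt (pAh d) l j = (d : ℝ)⁻¹ := by
  have hsum : ∑ j', margAt (pAh d) l j' = 1 := by rw [sum_margAt]; exact sum_pAh d
  rw [Finset.sum_congr rfl (fun j' _ => margAt_pAh_const l j' j), Finset.sum_const,
    Finset.card_univ, Fintype.card_fin, nsmul_eq_mul] at hsum
  exact eq_inv_of_mul_eq_one_right hsum

lemma insertAt_injective_iff {n d : ℕ} (l : Fin n) (i : Fin d)
    (g : {m : Fin n // m ≠ l} → Fin d) :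
    Function.Injective (insertAt l i g) ↔ Function.Injective g ∧ ∀ m, g m ≠ i := by
  constructor
  · intro h
    refine ⟨?_, ?_⟩
    · intro m m' hmm
      have h2 : insertAt l i g m.1 = insertAt l i g m'.1 := by
        rw [insertAt_ne, insertAt_ne, hmm]
      exact Subtype.ext (h h2)
    · intro m hm
      have h2 : insertAt l i g m.1 = insertAt l i g l := by
        rw [insertAt_ne, insertAt_self, hm]
      exact m.2 (h h2)
  · rintro ⟨hg, hi⟩ a b hab
    by_cases ha : a = l <;> by_cases hb : b = l
    · rw [ha, hb]
    · rw [ha, insertAt_self, insertAt_ne l i g ⟨b, hb⟩] at hab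
      exact absurd hab.symm (hi ⟨b, hb⟩)
    · rw [hb, insertAt_ne l i g ⟨a, ha⟩, insertAt_self] at hab
      exact absurd hab (hi ⟨a, ha⟩)
    · rw [insertAt_ne l i g ⟨a, ha⟩, insertAt_ne l i g ⟨b, hb⟩] at hab
      exact Subtype.ext_iff.mp (hg hab)

lemma card_ne {n : ℕ} (l : Fin n) : Fintype.card {m : Fin n // m ≠ l} = n - 1 := by
  rw [Fintype.card_subtype_compl, Fintype.card_subtype_eq, Fintype.card_fin]

lemma margRest_pAh {d : ℕ} (hd : 0 < d) (l : Fin d) (g : {m : Fin d // m ≠ l} → Fin d) :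
    margRest (pAh d) l g = if Function.Injective g then ((Nat.factorial d : ℝ))⁻¹ else 0 := by
  classical
  unfold margRest
  have hterm : ∀ i : Fin d, pAh d (insertAt l i g)
      = if Function.Injective g ∧ ∀ m, g m ≠ i then ((Nat.factorial d : ℝ))⁻¹ else 0 := by
    intro i
    unfold pAh
    rw [if_congr (insertAt_injective_iff l i g) rfl rfl]
  simp only [hterm]
  by_cases hg : Function.Injective g
  · rw [if_pos hg]
    set T : Finset (Fin d) := Finset.image g Finset.univ with hT
    have hmem : ∀ i : Fin d, (Function.Injective g ∧ ∀ m, g m ≠ i) ↔ i ∈ Tᶜ := by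
      intro i
      simp only [hT, Finset.mem_compl, Finset.mem_image, not_exists]
      constructor
      · rintro ⟨_, h⟩
        rintro m ⟨_, hm⟩
        exact h m hm
      · intro h
        exact ⟨hg, fun m hm => h m ⟨Finset.mem_univ m, hm⟩⟩
    rw [Finset.sum_congr rfl (fun i _ => if_congr (hmem i) rfl rfl)]
    rw [Finset.sum_ite_mem, Finset.univ_inter, Finset.sum_const, Finset.card_compl]
    have hTcard : T.card = d - 1 := by
      rw [hT, Finset.card_image_of_injective _ hg, Finset.card_univ, card_ne]
    rw [hTcard, Fintype.card_fin]
    have : d - (d - 1) = 1 := by omega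
    rw [this, one_nsmul]
  · rw [if_neg hg]
    apply Finset.sum_eq_zero
    intro i _
    rw [if_neg (fun h => hg h.1)]

lemma restInj_card {d : ℕ} (hd : 0 < d) (l : Fin d) :
    (Finset.univ.filter fun g : {m : Fin d // m ≠ l} → Fin d => Function.Injective g).card
      = Nat.factorial d := by
  classical
  rw [← Fintype.card_subtype,
    Fintype.card_congr (Equiv.subtypeInjectiveEquivEmbedding _ _),
    Fintype.card_embedding_eq, Fintype.card_fin, card_ne]
  cases d with
  | zero => omega
  | succ k =>
    rw [Nat.succ_sub_one, ← Nat.descFactorial_self]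
    rw [Nat.descFactorial_succ]
    simp

lemma MI_aharonov {d : ℕ} (hd : 2 ≤ d) (B : Fin d → Fin d → ℂ) (hB : IsONB B) (l : Fin d) :
    mutualInfo (jointProb (proj (aharonov d)) (fun _ => B)) l = Real.logb 2 d := by
  classical
  have hdpos : 0 < d := by omega
  have hp : jointProb (proj (aharonov d)) (fun _ => B) = pAh d :=
    funext (jointProb_aharonov B hB)
  rw [hp]
  unfold mutualInfo
  have hfac : 0 < (Finset.univ.filter fun x : Idx d d => Function.Injective x).card := by
    rw [injective_card]; exact Nat.factorial_pos d
  have hjoint : shannon (pAh d) =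
      Real.logb 2 ((Finset.univ.filter fun x : Idx d d => Function.Injective x).card : ℝ) := by
    apply shannon_uniform _ hfac
    intro a
    unfold pAh
    rw [injective_card]
    simp [Finset.mem_filter]
  have hA : shannon (margAt (pAh d) l) = Real.logb 2 ((Finset.univ : Finset (Fin d)).card : ℝ) := by
    apply shannon_uniform _ (by simp [hdpos])
    intro j
    rw [margAt_pAh hdpos l j]
    simp
  have hrest : 0 < (Finset.univ.filter
      fun g : {m : Fin d // m ≠ l} → Fin d => Function.Injective g).card := by
    rw [restInj_card hdpos]; exact Nat.factorial_pos d
  have hR : shannon (margRest (pAh d) l) = Real.logb 2 (((Finset.univ.filter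
      fun g : {m : Fin d // m ≠ l} → Fin d => Function.Injective g).card : ℝ)) := by
    apply shannon_uniform _ hrest
    intro g
    rw [margRest_pAh hdpos l g, restInj_card hdpos]
    simp [Finset.mem_filter]
  rw [hjoint, hA, hR, injective_card, restInj_card hdpos]
  simp

/-- Measuring any single orthonormal basis on all subsystems of the Aharonov state gives
mutual information `log₂ d` between each subsystem and the rest; consequently `𝒮_d`
maximizes `𝒞_N` whenever `N ≥ 2` mutually unbiased bases exist on `ℂ^d`. -/
theorem aharonov_maximizes_CN (d : ℕ) (hd : 2 ≤ d) :
    (∀ B : Fin d → Fin d → ℂ, IsONB B → ∀ l : Fin d,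
      mutualInfo (jointProb (proj (aharonov d)) (fun _ => B)) l = Real.logb 2 d) ∧
    ∀ N : ℕ, 2 ≤ N →
      (∃ B : Fin N → Fin d → Fin d → ℂ, (∀ k, IsONB (B k)) ∧
        ∀ k k', k ≠ k' → MutUnbiased (B k) (B k')) →
      IsGreatest (CNvalues N (proj (aharonov d))) (Real.logb 2 d) := by

  have hdpos : 0 < d := by omega
  have hd0 : ((d:ℝ)) ≠ 0 := by positivity
  constructor
  · intro B hB l
    exact MI_aharonov hd B hB l
  · rintro N hN ⟨B, hONB, hMUB⟩
    have hN0 : ((N:ℝ)) ≠ 0 := by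
      have : 0 < N := by omega
      positivity
    constructor
    · refine ⟨fun k _ => B k, ⟨fun k l => hONB k, fun l k k' h => hMUB k k' h⟩, ?_⟩
      have hMI : ∀ k : Fin N, ∀ l : Fin d,
          mutualInfo (jointProb (proj (aharonov d)) (fun _ : Fin d => B k)) l
            = Real.logb 2 (d:ℝ) :=
        fun k l => MI_aharonov hd (B k) (hONB k) l
      simp only [CNval, hMI, Finset.sum_const, Finset.card_univ, Fintype.card_fin,
        nsmul_eq_mul]
      field_simp
    · rintro x ⟨B', hvalid, rfl⟩
      have hMIle : ∀ k : Fin N, ∀ l : Fin d,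
          mutualInfo (jointProb (proj (aharonov d)) (B' k)) l ≤ Real.logb 2 (d:ℝ) := by
        intro k l
        apply mutualInfo_le_logb hdpos
        · intro i
          rw [jointProb_proj]
          exact Complex.normSq_nonneg _
        · exact sum_jointProb_proj _ _ (fun l' => hvalid.1 k l') (sum_normSq_aharonov d)
      have hsum : (∑ k : Fin N, ∑ l : Fin d, mutualInfo (jointProb (proj (aharonov d)) (B' k)) l)
          ≤ (N : ℝ) * ((d:ℝ) * Real.logb 2 (d:ℝ)) := by
        calc (∑ k : Fin N, ∑ l : Fin d, mutualInfo (jointProb (proj (aharonov d)) (B' k)) l)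
            ≤ ∑ _k : Fin N, ∑ _l : Fin d, Real.logb 2 (d:ℝ) :=
              Finset.sum_le_sum (fun k _ => Finset.sum_le_sum (fun l _ => hMIle k l))
          _ = (N:ℝ) * ((d:ℝ) * Real.logb 2 (d:ℝ)) := by
              simp [Finset.sum_const, Finset.card_univ, mul_assoc]
      have h1 : (0:ℝ) ≤ 1 / ((d:ℝ) * (N:ℝ)) := by positivity
      unfold CNval
      calc (1 / ((d:ℝ) * (N:ℝ))) *
            (∑ k : Fin N, ∑ l : Fin d, mutualInfo (jointProb (proj (aharonov d)) (B' k)) l)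
          ≤ (1 / ((d:ℝ) * (N:ℝ))) * ((N:ℝ) * ((d:ℝ) * Real.logb 2 (d:ℝ))) :=
            mul_le_mul_of_nonneg_left hsum h1
        _ = Real.logb 2 (d:ℝ) := by field_simp

end
end Paper
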